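/- Let (Z_n) be real random variables and (a_n) positive reals with a_n → ∞. Suppose for every x < 0, lim_n (1/a_n²) log P(Z_n ≤ x) = −x²/2, and for every x > 0, lim_n (1/a_n²) log P(Z_n ≥ x) = −x²/2. Then for every open interval U = (a,b) with a < b, at least one endpoint finite and neither endpoint zero, lim_n (1/a_n²) log P(Z_n ∈ U) equals −b²/2 if a < b < 0, equals 0 if a < 0 < b, and equals −a²/2 if 0 < a < b. -/

import Mathlib

open Filter MeasureTheory
open scoped ENNReal

noncomputable def OILE (r : ℝ) : ℝ≥0∞ := EReal.exp (r : EReal)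

lemma OILE_eq (r : ℝ) : OILE r = ENNReal.ofReal (Real.exp r) := EReal.exp_coe r

lemma OILE_ne_zero (r : ℝ) : OILE r ≠ 0 := by simp [OILE, Real.exp_pos r]

lemma OILE_ne_top (r : ℝ) : OILE r ≠ ∞ := by simp [OILE]

lemma OILE_lt_one {r : ℝ} (h : r < 0) : OILE r < 1 :=
  EReal.exp_lt_one_iff.mpr (by exact_mod_cast h)

lemma OILE_lt_OILE {r s : ℝ} (h : r < s) : OILE r < OILE s :=
  EReal.exp_lt_exp_iff.mpr (by exact_mod_cast h)

lemma OILE_zero : OILE 0 = 1 := by simp [OILE]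

lemma OIL_tendsto_mul_log_iff {f : ℕ → ℝ≥0∞} {c : ℕ → ℝ} {r : ℝ} :
    Tendsto (fun n => ((c n : ℝ) : EReal) * ENNReal.log (f n)) atTop (nhds ((r : ℝ) : EReal)) ↔
    Tendsto (fun n => f n ^ (c n)) atTop (nhds (OILE r)) := by
  have h1 : (fun n => ((c n : ℝ) : EReal) * ENNReal.log (f n))
      = fun n => ENNReal.log (f n ^ (c n)) := funext fun n => (ENNReal.log_rpow).symm
  rw [h1]
  constructor
  · intro h
    have h2 := (ENNReal.continuous_exp.tendsto _).comp h
    simpa [Function.comp_def, ENNReal.exp_log, OILE] using h2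
  · intro h
    have h2 := (ENNReal.continuous_log.tendsto _).comp h
    rw [show ((r : ℝ) : EReal) = ENNReal.log (OILE r) from (EReal.log_exp (r : EReal)).symm]
    exact h2

lemma OIL_rpow_zero {A : ℕ → ℝ} (hA : Tendsto A atTop atTop) {R : ℝ≥0∞} (hR : R < 1) :
    Tendsto (fun n => R ^ (A n)) atTop (nhds 0) := by
  rcases eq_or_ne R 0 with rfl | hR0
  · have h : ∀ᶠ n in atTop, (0 : ℝ≥0∞) = (0 : ℝ≥0∞) ^ (A n) := by
      filter_upwards [hA.eventually_ge_atTop 1] with n hn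
      exact (ENNReal.zero_rpow_of_pos (lt_of_lt_of_le one_pos hn)).symm
    exact Tendsto.congr' h tendsto_const_nhds
  · have hRt : R ≠ ∞ := ne_top_of_lt hR
    have hr0 : 0 < R.toReal := ENNReal.toReal_pos hR0 hRt
    have hr1 : R.toReal < 1 := by
      rw [← ENNReal.toReal_one]
      exact (ENNReal.toReal_lt_toReal hRt (by norm_num)).mpr hR
    have key : Tendsto (fun x : ℝ => R.toReal ^ x) atTop (nhds 0) :=
      tendsto_rpow_atTop_of_base_lt_one _ (by linarith) hr1
    have h2 := (ENNReal.continuous_ofReal.tendsto _).comp (key.comp hA)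
    simp only [Function.comp_def, ENNReal.ofReal_zero] at h2
    refine h2.congr fun n => ?_
    rw [← ENNReal.ofReal_rpow_of_pos hr0, ENNReal.ofReal_toReal hRt]

lemma OIL_rpow_inv_one {A : ℕ → ℝ} (hA : Tendsto A atTop atTop) {R : ℝ≥0∞}
    (hR0 : R ≠ 0) (hRt : R ≠ ∞) :
    Tendsto (fun n => R ^ (A n)⁻¹) atTop (nhds 1) := by
  have hr0 : 0 < R.toReal := ENNReal.toReal_pos hR0 hRt
  have hinv : Tendsto (fun n => (A n)⁻¹) atTop (nhds 0) := hA.inv_tendsto_atTop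
  have key : Tendsto (fun n => R.toReal ^ (A n)⁻¹) atTop (nhds 1) := by
    have h3 : Tendsto (fun n => Real.exp (Real.log R.toReal * (A n)⁻¹)) atTop (nhds 1) := by
      have h5 : Tendsto (fun n => Real.log R.toReal * (A n)⁻¹) atTop (nhds 0) := by
        simpa using hinv.const_mul (Real.log R.toReal)
      have h4 := (Real.continuous_exp.tendsto 0).comp h5
      simpa [Function.comp_def] using h4
    refine h3.congr fun n => ?_
    rw [Real.rpow_def_of_pos hr0]
  have h2 := (ENNReal.continuous_ofReal.tendsto _).comp key
  simp only [Function.comp_def, ENNReal.ofReal_one] at h2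
  refine h2.congr fun n => ?_
  rw [← ENNReal.ofReal_rpow_of_pos hr0, ENNReal.ofReal_toReal hRt]

lemma OIL_rpow_eq {A : ℕ → ℝ} (hApos : ∀ n, 0 < A n) (q : ℝ≥0∞) (n : ℕ) :
    (q ^ (A n)⁻¹) ^ (A n) = q := by
  rw [← ENNReal.rpow_mul, inv_mul_cancel₀ (hApos n).ne', ENNReal.rpow_one]

lemma OIL_limsup_le {A : ℕ → ℝ} (hApos : ∀ n, 0 < A n) {u p : ℕ → ℝ≥0∞} {P : ℝ≥0∞}
    (hle : ∀ n, u n ≤ p n)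
    (hp : Tendsto (fun n => p n ^ (A n)⁻¹) atTop (nhds P)) :
    limsup (fun n => u n ^ (A n)⁻¹) atTop ≤ P := by
  rw [← hp.limsup_eq]
  exact limsup_le_limsup (Eventually.of_forall fun n =>
    ENNReal.rpow_le_rpow (hle n) (inv_nonneg.mpr (hApos n).le))

lemma OIL_le_liminf {A : ℕ → ℝ} (hApos : ∀ n, 0 < A n) {u p : ℕ → ℝ≥0∞} {P : ℝ≥0∞}
    (hle : ∀ n, p n ≤ u n)
    (hp : Tendsto (fun n => p n ^ (A n)⁻¹) atTop (nhds P)) :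
    P ≤ liminf (fun n => u n ^ (A n)⁻¹) atTop := by
  rw [← hp.liminf_eq]
  exact liminf_le_liminf (Eventually.of_forall fun n =>
    ENNReal.rpow_le_rpow (hle n) (inv_nonneg.mpr (hApos n).le))

lemma OIL_le_liminf_sub {A : ℕ → ℝ} (hA : Tendsto A atTop atTop) (hApos : ∀ n, 0 < A n)
    {u p q : ℕ → ℝ≥0∞} {P Q : ℝ≥0∞}
    (hp1 : ∀ n, p n ≤ 1) (hPt : P ≠ ∞) (hQP : Q < P)
    (hsub : ∀ n, p n ≤ u n + q n)
    (hp : Tendsto (fun n => p n ^ (A n)⁻¹) atTop (nhds P))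
    (hq : Tendsto (fun n => q n ^ (A n)⁻¹) atTop (nhds Q)) :
    P ≤ liminf (fun n => u n ^ (A n)⁻¹) atTop := by
  obtain ⟨R, hQR, hRP⟩ := exists_between hQP
  obtain ⟨R', hRR', hR'P⟩ := exists_between hRP
  have hR'0 : R' ≠ 0 := (lt_of_le_of_lt (zero_le : (0 : ℝ≥0∞) ≤ Q) (hQR.trans hRR')).ne'
  have hR't : R' ≠ ∞ := ne_top_of_lt hR'P
  have hD1 : R / R' < 1 := by
    rw [ENNReal.div_lt_iff (Or.inl hR'0) (Or.inl hR't), one_mul]; exact hRR'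
  have hDt : R / R' ≠ ∞ := ne_top_of_lt hD1
  have hhalf := (OIL_rpow_zero hA hD1).eventually_lt_const
    (show (0 : ℝ≥0∞) < 2⁻¹ by norm_num)
  have h1 := hq.eventually_lt_const hQR
  have h2 := hp.eventually_const_lt hR'P
  have hpnt : ∀ n, p n ≠ ∞ := fun n => ne_top_of_lt (lt_of_le_of_lt (hp1 n) ENNReal.one_lt_top)
  have key : ∀ᶠ n in atTop, p n / 2 ≤ u n := by
    filter_upwards [hhalf, h1, h2] with n hn1 hn2 hn3
    have e2 : R' ^ (A n) ≤ p n := by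
      calc R' ^ A n ≤ (p n ^ (A n)⁻¹) ^ A n :=
            ENNReal.rpow_le_rpow hn3.le (hApos n).le
        _ = p n := OIL_rpow_eq hApos _ n
    have hq_half : q n ≤ p n / 2 := by
      calc q n = (q n ^ (A n)⁻¹) ^ (A n) := (OIL_rpow_eq hApos _ n).symm
        _ ≤ R ^ A n := ENNReal.rpow_le_rpow hn2.le (hApos n).le
        _ = (R / R' * R') ^ A n := by rw [ENNReal.div_mul_cancel hR'0 hR't]
        _ = (R / R') ^ A n * R' ^ A n := ENNReal.mul_rpow_of_ne_top hDt hR't _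
        _ ≤ 2⁻¹ * p n := mul_le_mul' hn1.le e2
        _ = p n / 2 := by rw [ENNReal.div_eq_inv_mul]
    have h' : p n ≤ u n + p n / 2 := (hsub n).trans (add_le_add_right hq_half _)
    have h'' := tsub_le_iff_right.mpr h'
    rwa [ENNReal.sub_half (hpnt n)] at h''
  have h3 : Tendsto (fun n => (p n / 2) ^ (A n)⁻¹) atTop (nhds P) := by
    have h2half : Tendsto (fun n => (2⁻¹ : ℝ≥0∞) ^ (A n)⁻¹) atTop (nhds 1) :=
      OIL_rpow_inv_one hA (by norm_num) (by norm_num)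
    have h4 := ENNReal.Tendsto.mul hp (Or.inr (by norm_num)) h2half (Or.inr hPt)
    simp only [mul_one] at h4
    refine h4.congr fun n => ?_
    rw [← ENNReal.mul_rpow_of_ne_top (hpnt n) (by norm_num), ← div_eq_mul_inv]
  calc P = liminf (fun n => (p n / 2) ^ (A n)⁻¹) atTop := h3.liminf_eq.symm
    _ ≤ liminf (fun n => u n ^ (A n)⁻¹) atTop :=
      liminf_le_liminf (key.mono fun n hn =>
        ENNReal.rpow_le_rpow hn (inv_nonneg.mpr (hApos n).le))

lemma OIL_tendsto_one {A : ℕ → ℝ} (hA : Tendsto A atTop atTop) (hApos : ∀ n, 0 < A n)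
    {u q1 q2 : ℕ → ℝ≥0∞} {Q1 Q2 : ℝ≥0∞} (hu1 : ∀ n, u n ≤ 1)
    (hQ1 : Q1 < 1) (hQ2 : Q2 < 1)
    (hsub : ∀ n, 1 ≤ u n + q1 n + q2 n)
    (h1 : Tendsto (fun n => q1 n ^ (A n)⁻¹) atTop (nhds Q1))
    (h2 : Tendsto (fun n => q2 n ^ (A n)⁻¹) atTop (nhds Q2)) :
    Tendsto (fun n => u n ^ (A n)⁻¹) atTop (nhds 1) := by
  have tail : ∀ {q : ℕ → ℝ≥0∞} {Q : ℝ≥0∞}, Q < 1 →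
      Tendsto (fun n => q n ^ (A n)⁻¹) atTop (nhds Q) →
      ∀ᶠ n in atTop, q n ≤ 4⁻¹ := by
    intro q Q hQ hq
    obtain ⟨R, hQR, hR1⟩ := exists_between hQ
    have hsmall := (OIL_rpow_zero hA hR1).eventually_lt_const
      (show (0 : ℝ≥0∞) < 4⁻¹ by norm_num)
    filter_upwards [hq.eventually_lt_const hQR, hsmall] with n hn hn2
    calc q n = (q n ^ (A n)⁻¹) ^ A n := (OIL_rpow_eq hApos _ n).symm
      _ ≤ R ^ A n := ENNReal.rpow_le_rpow hn.le (hApos n).le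
      _ ≤ 4⁻¹ := hn2.le
  have hquarter : (4⁻¹ : ℝ≥0∞) + 4⁻¹ = 2⁻¹ := by
    rw [← two_mul]
    rw [show ((4 : ℝ≥0∞) : ℝ≥0∞)⁻¹ = 2⁻¹ * 2⁻¹ by
      rw [← ENNReal.mul_inv (by norm_num) (by norm_num)]; norm_num]
    rw [← mul_assoc, ENNReal.mul_inv_cancel (by norm_num) (by norm_num), one_mul]
  have hhalf : ∀ᶠ n in atTop, (2⁻¹ : ℝ≥0∞) ≤ u n := by
    filter_upwards [tail hQ1 h1, tail hQ2 h2] with n k1 k2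
    have h' : (1 : ℝ≥0∞) ≤ u n + 2⁻¹ := by
      calc (1 : ℝ≥0∞) ≤ u n + q1 n + q2 n := hsub n
        _ ≤ u n + 4⁻¹ + 4⁻¹ := add_le_add (add_le_add_right k1 _) k2
        _ = u n + 2⁻¹ := by rw [add_assoc, hquarter]
    have h'' := tsub_le_iff_right.mpr h'
    have e : (1 : ℝ≥0∞) - 2⁻¹ = 2⁻¹ := by
      rw [← one_div]; exact ENNReal.sub_half ENNReal.one_ne_top
    exact e ▸ h''
  refine tendsto_of_tendsto_of_tendsto_of_le_of_le'
    (OIL_rpow_inv_one hA (show (2⁻¹ : ℝ≥0∞) ≠ 0 by norm_num) (by norm_num))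
    tendsto_const_nhds ?_ ?_
  · filter_upwards [hhalf] with n hn
    exact ENNReal.rpow_le_rpow hn (inv_nonneg.mpr (hApos n).le)
  · exact Eventually.of_forall fun n => ENNReal.rpow_le_one (hu1 n) (inv_nonneg.mpr (hApos n).le)
lemma OIL_gcont : Continuous fun x : ℝ => OILE (-(x ^ 2) / 2) := by
  simp only [OILE_eq]
  exact ENNReal.continuous_ofReal.comp (Real.continuous_exp.comp (by continuity))

lemma OIL_case_neg {A : ℕ → ℝ} (hA : Tendsto A atTop atTop) (hApos : ∀ n, 0 < A n)
    {b c : ℝ} (hbc : b < c) (hc : c < 0)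
    {T : ℝ → ℕ → ℝ≥0∞} (hT1 : ∀ x n, T x n ≤ 1)
    (hT : ∀ x : ℝ, x < 0 →
      Tendsto (fun n => T x n ^ (A n)⁻¹) atTop (nhds (OILE (-(x ^ 2) / 2))))
    {U : ℕ → ℝ≥0∞}
    (hsub : ∀ x, b < x → x < c → ∀ n, T x n ≤ U n + T b n)
    (hupper : ∀ n, U n ≤ T c n) :
    Tendsto (fun n => U n ^ (A n)⁻¹) atTop (nhds (OILE (-(c ^ 2) / 2))) := by
  have hb0 : b < 0 := hbc.trans hc
  refine tendsto_of_le_liminf_of_limsup_le ?_ (OIL_limsup_le hApos hupper (hT c hc))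
  refine le_of_tendsto ((OIL_gcont.tendsto c).mono_left nhdsWithin_le_nhds :
      Tendsto (fun x : ℝ => OILE (-(x ^ 2) / 2)) (nhdsWithin c (Set.Iio c))
        (nhds (OILE (-(c ^ 2) / 2)))) ?_
  filter_upwards [Ioo_mem_nhdsLT_of_mem (⟨hbc, le_refl c⟩ : c ∈ Set.Ioc b c)] with x hx
  have hx0 : x < 0 := hx.2.trans hc
  exact OIL_le_liminf_sub hA hApos (hT1 x) (OILE_ne_top _)
    (OILE_lt_OILE (by nlinarith [hx.1] : -(b ^ 2) / 2 < -(x ^ 2) / 2))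
    (hsub x hx.1 hx.2) (hT x hx0) (hT b hb0)

lemma OIL_case_pos {A : ℕ → ℝ} (hA : Tendsto A atTop atTop) (hApos : ∀ n, 0 < A n)
    {b c : ℝ} (hbc : b < c) (hb : 0 < b)
    {T : ℝ → ℕ → ℝ≥0∞} (hT1 : ∀ x n, T x n ≤ 1)
    (hT : ∀ x : ℝ, 0 < x →
      Tendsto (fun n => T x n ^ (A n)⁻¹) atTop (nhds (OILE (-(x ^ 2) / 2))))
    {U : ℕ → ℝ≥0∞}
    (hsub : ∀ x, b < x → x < c → ∀ n, T x n ≤ U n + T c n)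
    (hupper : ∀ n, U n ≤ T b n) :
    Tendsto (fun n => U n ^ (A n)⁻¹) atTop (nhds (OILE (-(b ^ 2) / 2))) := by
  have hc0 : 0 < c := hb.trans hbc
  refine tendsto_of_le_liminf_of_limsup_le ?_ (OIL_limsup_le hApos hupper (hT b hb))
  refine le_of_tendsto ((OIL_gcont.tendsto b).mono_left nhdsWithin_le_nhds :
      Tendsto (fun x : ℝ => OILE (-(x ^ 2) / 2)) (nhdsWithin b (Set.Ioi b))
        (nhds (OILE (-(b ^ 2) / 2)))) ?_
  filter_upwards [Ioo_mem_nhdsGT_of_mem (⟨le_refl b, hbc⟩ : b ∈ Set.Ico b c)] with x hx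
  have hx0 : 0 < x := hb.trans hx.1
  exact OIL_le_liminf_sub hA hApos (hT1 x) (OILE_ne_top _)
    (OILE_lt_OILE (by nlinarith [hx.2] : -(c ^ 2) / 2 < -(x ^ 2) / 2))
    (hsub x hx.1 hx.2) (hT x hx0) (hT c hc0)

lemma OIL_case_one {A : ℕ → ℝ} (hA : Tendsto A atTop atTop) (hApos : ∀ n, 0 < A n)
    {U q1 q2 : ℕ → ℝ≥0∞} (hU1 : ∀ n, U n ≤ 1) {r1 r2 : ℝ} (h1 : r1 < 0) (h2 : r2 < 0)
    (hq1 : Tendsto (fun n => q1 n ^ (A n)⁻¹) atTop (nhds (OILE r1)))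
    (hq2 : Tendsto (fun n => q2 n ^ (A n)⁻¹) atTop (nhds (OILE r2)))
    (hsub : ∀ n, 1 ≤ U n + q1 n + q2 n) :
    Tendsto (fun n => U n ^ (A n)⁻¹) atTop (nhds (OILE 0)) := by
  rw [OILE_zero]
  exact OIL_tendsto_one hA hApos hU1 (OILE_lt_one h1) (OILE_lt_one h2) hsub hq1 hq2
set_option maxHeartbeats 1000000 in
/-- from the two one-sided moderate-deviation tail limits
`(1/a_n²) log P(Z_n ≤ x) → −x²/2` (x < 0) and `(1/a_n²) log P(Z_n ≥ x) → −x²/2` (x > 0),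
one gets, for every open interval `U = (a,b)` with at least one endpoint finite and
neither endpoint zero, `lim (1/a_n²) log P(Z_n ∈ U) = −b²/2` if `a < b < 0`, `= 0` if
`a < 0 < b`, and `= −a²/2` if `0 < a < b` (infinite endpoints included via `Iio`/`Ioi`);
the convention `log 0 = −∞` is realized by `ENNReal.log`, valued in `EReal`. -/
theorem open_interval_limits_from_tails
    (Ω : ℕ → Type*) [mΩ : ∀ n, MeasurableSpace (Ω n)]
    (μ : ∀ n, Measure (Ω n)) [hμ : ∀ n, IsProbabilityMeasure (μ n)]
    (Z : ∀ n, Ω n → ℝ) (a : ℕ → ℝ)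
    (ha_pos : ∀ n, 0 < a n) (ha : Tendsto a atTop atTop)
    (hlow : ∀ x : ℝ, x < 0 →
      Tendsto (fun n => ((((a n) ^ 2)⁻¹ : ℝ) : EReal) *
          ENNReal.log (μ n {ω | Z n ω ≤ x}))
        atTop (nhds ((-(x ^ 2) / 2 : ℝ) : EReal)))
    (hup : ∀ x : ℝ, 0 < x →
      Tendsto (fun n => ((((a n) ^ 2)⁻¹ : ℝ) : EReal) *
          ENNReal.log (μ n {ω | x ≤ Z n ω}))
        atTop (nhds ((-(x ^ 2) / 2 : ℝ) : EReal))) :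
    (∀ b c : ℝ, b < c → b ≠ 0 → c ≠ 0 →
      Tendsto (fun n => ((((a n) ^ 2)⁻¹ : ℝ) : EReal) *
          ENNReal.log (μ n {ω | Z n ω ∈ Set.Ioo b c}))
        atTop (nhds (if c < 0 then ((-(c ^ 2) / 2 : ℝ) : EReal)
          else if b < 0 then (0 : EReal) else ((-(b ^ 2) / 2 : ℝ) : EReal)))) ∧
    (∀ c : ℝ, c ≠ 0 →
      Tendsto (fun n => ((((a n) ^ 2)⁻¹ : ℝ) : EReal) *
          ENNReal.log (μ n {ω | Z n ω ∈ Set.Iio c}))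
        atTop (nhds (if c < 0 then ((-(c ^ 2) / 2 : ℝ) : EReal) else (0 : EReal)))) ∧
    (∀ b : ℝ, b ≠ 0 →
      Tendsto (fun n => ((((a n) ^ 2)⁻¹ : ℝ) : EReal) *
          ENNReal.log (μ n {ω | Z n ω ∈ Set.Ioi b}))
        atTop (nhds (if 0 < b then ((-(b ^ 2) / 2 : ℝ) : EReal) else (0 : EReal)))) := by
  have hApos : ∀ n, 0 < (a n) ^ 2 := fun n => pow_pos (ha_pos n) 2
  have hA : Tendsto (fun n => (a n) ^ 2) atTop atTop :=
    (ha.atTop_mul_atTop₀ ha).congr fun n => (pow_two (a n)).symm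
  have hlow' : ∀ x : ℝ, x < 0 → Tendsto (fun n => (μ n {ω | Z n ω ≤ x}) ^ ((a n ^ 2)⁻¹))
      atTop (nhds (OILE (-(x ^ 2) / 2))) :=
    fun x hx => (OIL_tendsto_mul_log_iff (c := fun n => ((a n) ^ 2)⁻¹)).mp (hlow x hx)
  have hup' : ∀ x : ℝ, 0 < x → Tendsto (fun n => (μ n {ω | x ≤ Z n ω}) ^ ((a n ^ 2)⁻¹))
      atTop (nhds (OILE (-(x ^ 2) / 2))) :=
    fun x hx => (OIL_tendsto_mul_log_iff (c := fun n => ((a n) ^ 2)⁻¹)).mp (hup x hx)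
  have hprob : ∀ (n : ℕ) (S : Set (Ω n)), μ n S ≤ 1 := fun n S => prob_le_one
  refine ⟨?_, ?_, ?_⟩
  · -- Ioo
    intro b c hbc hb0 hc0
    rcases lt_trichotomy c 0 with hc | hc | hc
    · rw [if_pos hc]
      refine (OIL_tendsto_mul_log_iff (c := fun n => ((a n) ^ 2)⁻¹)).mpr ?_
      refine OIL_case_neg hA hApos hbc hc (fun x n => hprob n _) hlow'
        (fun x hx1 hx2 n => ?_) (fun n => measure_mono fun ω hω => le_of_lt hω.2)
      refine (measure_mono ?_).trans (measure_union_le _ _)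
      intro ω (hω : Z n ω ≤ x)
      rcases le_or_gt (Z n ω) b with h | h
      · exact Or.inr h
      · exact Or.inl ⟨h, lt_of_le_of_lt hω hx2⟩
    · exact absurd hc hc0
    · rcases lt_trichotomy b 0 with hb | hb | hb
      · rw [if_neg (not_lt.mpr hc.le), if_pos hb, ← EReal.coe_zero]
        refine (OIL_tendsto_mul_log_iff (c := fun n => ((a n) ^ 2)⁻¹)).mpr ?_
        refine OIL_case_one hA hApos (fun n => hprob n _)
          (by nlinarith [mul_pos (neg_pos.mpr hb) (neg_pos.mpr hb)] : -(b ^ 2) / 2 < 0)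
          (by nlinarith [mul_pos hc hc] : -(c ^ 2) / 2 < 0)
          (hlow' b hb) (hup' c hc) (fun n => ?_)
        calc (1 : ℝ≥0∞) = μ n Set.univ := measure_univ.symm
          _ ≤ μ n (({ω | Z n ω ∈ Set.Ioo b c} ∪ {ω | Z n ω ≤ b}) ∪ {ω | c ≤ Z n ω}) := by
              refine measure_mono fun ω _ => ?_
              rcases le_or_gt (Z n ω) b with h | h
              · exact Or.inl (Or.inr h)
              · rcases le_or_gt c (Z n ω) with h2 | h2
                · exact Or.inr h2
                · exact Or.inl (Or.inl ⟨h, h2⟩)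
          _ ≤ μ n ({ω | Z n ω ∈ Set.Ioo b c} ∪ {ω | Z n ω ≤ b}) + μ n {ω | c ≤ Z n ω} :=
              measure_union_le _ _
          _ ≤ μ n {ω | Z n ω ∈ Set.Ioo b c} + μ n {ω | Z n ω ≤ b} + μ n {ω | c ≤ Z n ω} :=
              add_le_add_left (measure_union_le _ _) _
      · exact absurd hb hb0
      · rw [if_neg (not_lt.mpr hc.le), if_neg (not_lt.mpr hb.le)]
        refine (OIL_tendsto_mul_log_iff (c := fun n => ((a n) ^ 2)⁻¹)).mpr ?_
        refine OIL_case_pos hA hApos hbc hb (fun x n => hprob n _) hup'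
          (fun x hx1 hx2 n => ?_) (fun n => measure_mono fun ω hω => le_of_lt hω.1)
        refine (measure_mono ?_).trans (measure_union_le _ _)
        intro ω (hω : x ≤ Z n ω)
        rcases le_or_gt c (Z n ω) with h | h
        · exact Or.inr h
        · exact Or.inl ⟨lt_of_lt_of_le hx1 hω, h⟩
  · -- Iio
    intro c hc0
    rcases lt_trichotomy c 0 with hc | hc | hc
    · rw [if_pos hc]
      refine (OIL_tendsto_mul_log_iff (c := fun n => ((a n) ^ 2)⁻¹)).mpr ?_
      refine OIL_case_neg hA hApos (show c - 1 < c by linarith) hc (fun x n => hprob n _) hlow'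
        (fun x hx1 hx2 n => ?_)
        (fun n => measure_mono fun ω (hω : Z n ω < c) => le_of_lt hω)
      exact le_trans (measure_mono fun ω (hω : Z n ω ≤ x) => lt_of_le_of_lt hω hx2) le_self_add
    · exact absurd hc hc0
    · rw [if_neg (not_lt.mpr hc.le), ← EReal.coe_zero]
      refine (OIL_tendsto_mul_log_iff (c := fun n => ((a n) ^ 2)⁻¹)).mpr ?_
      refine OIL_case_one hA hApos (fun n => hprob n _)
        (by nlinarith [mul_pos hc hc] : -(c ^ 2) / 2 < 0)
        (by nlinarith [mul_pos hc hc] : -(c ^ 2) / 2 < 0)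
        (hup' c hc) (hup' c hc) (fun n => ?_)
      calc (1 : ℝ≥0∞) = μ n Set.univ := measure_univ.symm
        _ ≤ μ n ({ω | Z n ω ∈ Set.Iio c} ∪ {ω | c ≤ Z n ω}) := by
            refine measure_mono fun ω _ => ?_
            rcases lt_or_ge (Z n ω) c with h | h
            · exact Or.inl h
            · exact Or.inr h
        _ ≤ μ n {ω | Z n ω ∈ Set.Iio c} + μ n {ω | c ≤ Z n ω} := measure_union_le _ _
        _ ≤ μ n {ω | Z n ω ∈ Set.Iio c} + μ n {ω | c ≤ Z n ω} + μ n {ω | c ≤ Z n ω} :=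
            le_self_add
  · -- Ioi
    intro b hb0
    rcases lt_trichotomy b 0 with hb | hb | hb
    · rw [if_neg (asymm hb), ← EReal.coe_zero]
      refine (OIL_tendsto_mul_log_iff (c := fun n => ((a n) ^ 2)⁻¹)).mpr ?_
      refine OIL_case_one hA hApos (fun n => hprob n _)
        (by nlinarith [mul_pos (neg_pos.mpr hb) (neg_pos.mpr hb)] : -(b ^ 2) / 2 < 0)
        (by nlinarith [mul_pos (neg_pos.mpr hb) (neg_pos.mpr hb)] : -(b ^ 2) / 2 < 0)
        (hlow' b hb) (hlow' b hb) (fun n => ?_)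
      calc (1 : ℝ≥0∞) = μ n Set.univ := measure_univ.symm
        _ ≤ μ n ({ω | Z n ω ∈ Set.Ioi b} ∪ {ω | Z n ω ≤ b}) := by
            refine measure_mono fun ω _ => ?_
            rcases le_or_gt (Z n ω) b with h | h
            · exact Or.inr h
            · exact Or.inl h
        _ ≤ μ n {ω | Z n ω ∈ Set.Ioi b} + μ n {ω | Z n ω ≤ b} := measure_union_le _ _
        _ ≤ μ n {ω | Z n ω ∈ Set.Ioi b} + μ n {ω | Z n ω ≤ b} + μ n {ω | Z n ω ≤ b} :=
            le_self_add
    · exact absurd hb hb0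
    · rw [if_pos hb]
      refine (OIL_tendsto_mul_log_iff (c := fun n => ((a n) ^ 2)⁻¹)).mpr ?_
      refine OIL_case_pos hA hApos (show b < b + 1 by linarith) hb (fun x n => hprob n _) hup'
        (fun x hx1 hx2 n => ?_)
        (fun n => measure_mono fun ω (hω : b < Z n ω) => le_of_lt hω)
      exact le_trans (measure_mono fun ω (hω : x ≤ Z n ω) => lt_of_lt_of_le hx1 hω) le_self_add
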